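/- Let R be a commutative ring, let M, N and Q be R-Lie algebras, let f : M → Q and g : N → Q be Lie algebra homomorphisms, and suppose M and N act on each other by R-bilinear maps (m, n) ↦ m•n and (n, m) ↦ n•m satisfying g(m•n) = ⁅f(m), g(n)⁆ and f(n•m) = ⁅g(n), f(m)⁆ for all m ∈ M, n ∈ N. Then the bilinear map h : M × N → Q defined by h(m, n) := ⁅f(m), g(n)⁆ is a Lie pairing, i.e. it satisfies h(⁅m, m'⁆, n) = h(m, m'•n) − h(m', m•n), h(m, ⁅n, n'⁆) = h(n'•m, n) − h(n•m, n'), and h(n•m, m'•n') = −⁅h(m, n), h(m', n')⁆ for all m, m' ∈ M and n, n' ∈ N. -/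
import Mathlib


universe u v

/-- An `R`-bilinear pairing `A × B → C` of modules, given as a plain two-argument
function. -/
def IsBilinearPairing (R : Type*) {A B C : Type*} [CommRing R]
    [AddCommGroup A] [Module R A] [AddCommGroup B] [Module R B]
    [AddCommGroup C] [Module R C] (f : A → B → C) : Prop :=
  (∀ (r : R) a b, f (r • a) b = r • f a b) ∧
  (∀ (r : R) a b, f a (r • b) = r • f a b) ∧
  (∀ a a' b, f (a + a') b = f a b + f a' b) ∧
  (∀ a b b', f a (b + b') = f a b + f a b')

/-- A Lie pairing `h : M × N → P` (Ellis) for Lie algebras `M`, `N` acting on each other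
via `actM` and `actN`. -/
def IsLiePairing (R : Type*) {M N P : Type*} [CommRing R]
    [LieRing M] [LieAlgebra R M] [LieRing N] [LieAlgebra R N]
    [LieRing P] [LieAlgebra R P]
    (actM : M → N → N) (actN : N → M → M) (h : M → N → P) : Prop :=
  IsBilinearPairing R h ∧
  (∀ m m' n, h ⁅m, m'⁆ n = h m (actM m' n) - h m' (actM m n)) ∧
  (∀ m n n', h m ⁅n, n'⁆ = h (actN n' m) n - h (actN n m) n') ∧
  (∀ m m' n n', h (actN n m) (actM m' n') = -⁅h m n, h m' n'⁆)

/-- If `f : M → Q` and `g : N → Q` are Lie algebra homomorphisms and `M`, `N` act on each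
other by bilinear maps compatible with `f` and `g` (namely `g(m • n) = ⁅f m, g n⁆` and
`f(n • m) = ⁅g n, f m⁆`), then `h(m, n) := ⁅f m, g n⁆` is a Lie pairing. -/
theorem bracket_is_lie_pairing
    (R : Type u) {M N Q : Type v} [CommRing R]
    [LieRing M] [LieAlgebra R M] [LieRing N] [LieAlgebra R N]
    [LieRing Q] [LieAlgebra R Q]
    (f : M →ₗ⁅R⁆ Q) (g : N →ₗ⁅R⁆ Q)
    (actM : M → N → N) (actN : N → M → M)
    (hbM : IsBilinearPairing R actM) (hbN : IsBilinearPairing R actN)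
    (hg : ∀ (m : M) (n : N), g (actM m n) = ⁅f m, g n⁆)
    (hf : ∀ (n : N) (m : M), f (actN n m) = ⁅g n, f m⁆) :
    IsLiePairing R actM actN (fun m n => ⁅f m, g n⁆) := by
  refine ⟨⟨?_, ?_, ?_, ?_⟩, ?_, ?_, ?_⟩
  · intro r a b; simp [smul_lie]
  · intro r a b; simp [lie_smul]
  · intro a a' b; simp [add_lie]
  · intro a b b'; simp [lie_add]
  · intro m m' n
    simp only [LieHom.map_lie, hg, lie_lie]
  · intro m n n'
    dsimp only
    simp only [LieHom.map_lie, hf]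
    rw [leibniz_lie, ← lie_skew (g n') (f m), ← lie_skew (g n) (f m), neg_lie,
      neg_lie, ← lie_skew ⁅f m, g n'⁆ (g n)]
    abel
  · intro m m' n n'
    dsimp only
    rw [hf, hg, ← lie_skew (g n) (f m), neg_lie]
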